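/- Let m ≥ 2 and H ≥ m be integers. Let μ⁴ be the product Haar probability measure on ℤ_[2]⁴ with coordinates (x, y, z, w), and set ξ = (x−w)² + 4yz. Then: (1) for each c ∈ {1, 5}, μ⁴{(x,y,z,w) : y is a unit, and ξ = 2^{2(H−m)}·u for some unit u with 8 ∣ u − c} = (1/2)·4^{-(H−m+1)}; (2) μ⁴{(x,y,z,w) : y is a unit, and ξ = 2^{2(H−m)+2}·u for some unit u with 4 ∣ u − 3} = (1/4)·4^{-(H−m+1)}; (3) μ⁴{(x,y,z,w) : y is a unit, and ξ = 2^{2(H−m)+3}·u for some unit u} = (1/4)·4^{-(H−m+1)}. (Conditioned on y being a unit, these say: for i ∈ {1,5} the probability that sqf(ξ) ≡ i (mod 8) and H_M = H is 4^{-(H−(m−1))}, and for the classes sqf(ξ) ≡ 3 (mod 4) and sqf(ξ) ≡ 2 (mod 4) it is (1/2)·4^{-(H−(m−1))}; this is Theorem 6.1.) -/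
import Mathlib


open MeasureTheory
open scoped ENNReal

noncomputable instance : MeasurableSpace ℤ_[2] := borel ℤ_[2]
instance : BorelSpace ℤ_[2] := ⟨rfl⟩

lemma prime_two' : Prime (2 : ℤ_[2]) := by
  have := PadicInt.prime_p (p := 2)
  simpa using this

lemma two_dvd_or' (x : ℤ_[2]) : (2:ℤ_[2]) ∣ x ∨ (2:ℤ_[2]) ∣ x - 1 := by
  have h := PadicInt.appr_spec 1 x
  rw [Ideal.mem_span_singleton, pow_one] at h
  rw [show ((2:ℕ):ℤ_[2]) = (2:ℤ_[2]) by norm_num] at h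
  rcases Nat.even_or_odd (x.appr 1) with ⟨t, ht⟩ | ⟨t, ht⟩
  · left
    obtain ⟨s, hs⟩ := h
    exact ⟨s + t, by rw [ht] at hs; push_cast at hs ⊢; linear_combination hs⟩
  · right
    obtain ⟨s, hs⟩ := h
    exact ⟨s + t, by rw [ht] at hs; push_cast at hs ⊢; linear_combination hs⟩

lemma dvd_iff_norm' (n : ℕ) (x : ℤ_[2]) : (2:ℤ_[2])^n ∣ x ↔ ‖x‖ ≤ (2:ℝ)^(-(n:ℤ)) := by
  have h := (PadicInt.norm_le_pow_iff_mem_span_pow x n (p := 2)).trans Ideal.mem_span_singleton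
  rw [show ((2:ℕ):ℤ_[2]) = 2 by norm_num, show ((2:ℕ):ℝ) = 2 by norm_num] at h
  exact h.symm

lemma measurableSet_dvd' (n : ℕ) (c : ℤ_[2]) :
    MeasurableSet {x : ℤ_[2] | (2:ℤ_[2])^n ∣ x - c} := by
  have : {x : ℤ_[2] | (2:ℤ_[2])^n ∣ x - c} = Metric.closedBall c ((2:ℝ)^(-(n:ℤ))) := by
    ext x
    simp only [Set.mem_setOf_eq, Metric.mem_closedBall, dist_eq_norm, dvd_iff_norm']
  rw [this]
  exact measurableSet_closedBall

lemma measurableSet_dvd0 (n : ℕ) : MeasurableSet {x : ℤ_[2] | (2:ℤ_[2])^n ∣ x} := by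
  simpa using measurableSet_dvd' n 0

lemma meas_dvd' (μ : Measure ℤ_[2]) [μ.IsAddHaarMeasure] [IsProbabilityMeasure μ]
    (n : ℕ) (c : ℤ_[2]) : μ {x : ℤ_[2] | (2:ℤ_[2])^n ∣ x - c} = ((2:ℝ≥0∞)^n)⁻¹ := by
  have htrans : ∀ (m : ℕ) (c' : ℤ_[2]), μ {x : ℤ_[2] | (2:ℤ_[2])^m ∣ x - c'}
      = μ {x : ℤ_[2] | (2:ℤ_[2])^m ∣ x} := by
    intro m c'
    have : {x : ℤ_[2] | (2:ℤ_[2])^m ∣ x - c'} = (fun x => x + (-c')) ⁻¹' {x | (2:ℤ_[2])^m ∣ x} := by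
      ext x; simp [sub_eq_add_neg]
    rw [this, measure_preimage_add_right]
  rw [htrans n c]
  clear c
  induction n with
  | zero => simp
  | succ n ih =>
    have hsplit : {x : ℤ_[2] | (2:ℤ_[2])^n ∣ x} =
        {x : ℤ_[2] | (2:ℤ_[2])^(n+1) ∣ x} ∪ {x : ℤ_[2] | (2:ℤ_[2])^(n+1) ∣ x - 2^n} := by
      ext x
      simp only [Set.mem_setOf_eq, Set.mem_union]
      constructor
      · rintro ⟨t, rfl⟩
        rcases two_dvd_or' t with ⟨s, hs⟩ | ⟨s, hs⟩
        · left; exact ⟨s, by rw [hs]; ring⟩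
        · right
          exact ⟨s, by have ht : t = 1 + 2*s := by linear_combination hs
                       rw [ht]; ring⟩
      · rintro (⟨t, ht⟩ | ⟨t, ht⟩)
        · exact ⟨2*t, by rw [ht]; ring⟩
        · exact ⟨1 + 2*t, by linear_combination ht⟩
    have hdisj : Disjoint {x : ℤ_[2] | (2:ℤ_[2])^(n+1) ∣ x} {x : ℤ_[2] | (2:ℤ_[2])^(n+1) ∣ x - 2^n} := by
      rw [Set.disjoint_left]
      rintro x hx hx'
      have h2 : (2:ℤ_[2])^(n+1) ∣ (2:ℤ_[2])^n := by
        have := dvd_sub hx hx'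
        simpa using this
      have := (pow_dvd_pow_iff prime_two'.ne_zero prime_two'.not_unit).mp h2
      omega
    have hmeq := htrans (n+1) (2^n)
    have key : μ {x : ℤ_[2] | (2:ℤ_[2])^(n+1) ∣ x} + μ {x : ℤ_[2] | (2:ℤ_[2])^(n+1) ∣ x} = ((2:ℝ≥0∞)^n)⁻¹ := by
      rw [← ih, hsplit, measure_union hdisj (by simpa using measurableSet_dvd' (n+1) (2^n)), hmeq]
    have h2 : (2:ℝ≥0∞) * μ {x : ℤ_[2] | (2:ℤ_[2])^(n+1) ∣ x} = (2:ℝ≥0∞) * ((2:ℝ≥0∞)^(n+1))⁻¹ := by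
      rw [two_mul, key, pow_succ, ENNReal.mul_inv (by simp) (by simp),
        mul_comm ((2:ℝ≥0∞)^n)⁻¹ 2⁻¹, ← mul_assoc,
        ENNReal.mul_inv_cancel (by norm_num) (by norm_num), one_mul]
    exact (ENNReal.mul_right_inj (by norm_num) (by norm_num)).mp h2

lemma isUnit_iff_not_dvd' (x : ℤ_[2]) : IsUnit x ↔ ¬ (2:ℤ_[2]) ∣ x := by
  have hlt := PadicInt.norm_lt_one_iff_dvd x (p := 2)
  rw [show ((2:ℕ):ℤ_[2]) = (2:ℤ_[2]) by norm_num] at hlt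
  rw [PadicInt.isUnit_iff, ← hlt]
  constructor
  · intro h; rw [h]; exact lt_irrefl 1
  · intro h
    push_neg at h
    exact le_antisymm (PadicInt.norm_le_one x) h

lemma two_not_dvd_one' : ¬ (2:ℤ_[2]) ∣ 1 := fun h => prime_two'.not_unit (isUnit_of_dvd_one h)

lemma four_eq' : (4:ℤ_[2]) = 2^2 := by norm_num

lemma four_dvd_sq_iff' (t : ℤ_[2]) : (4:ℤ_[2]) ∣ t^2 ↔ (2:ℤ_[2]) ∣ t := by
  rw [four_eq']
  constructor
  · intro h
    exact prime_two'.dvd_of_dvd_pow (dvd_trans (dvd_pow_self 2 two_ne_zero) h)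
  · rintro ⟨s, rfl⟩; exact ⟨s^2, by ring⟩

lemma eight_dvd_odd_sq' (t : ℤ_[2]) (h : ¬ (2:ℤ_[2]) ∣ t) : (8:ℤ_[2]) ∣ t^2 - 1 := by
  rcases two_dvd_or' t with h' | ⟨s, hs⟩
  · exact absurd h' h
  · have ht : t = 1 + 2*s := by linear_combination hs
    rcases two_dvd_or' s with ⟨r, hr⟩ | ⟨r, hr⟩
    · exact ⟨r + 2*r^2, by rw [ht, hr]; ring⟩
    · have hs' : s = 1 + 2*r := by linear_combination hr
      exact ⟨1 + 3*r + 2*r^2, by rw [ht, hs']; ring⟩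

lemma dvd_unit_mul' (d y t : ℤ_[2]) (hy : IsUnit y) : d ∣ y * t ↔ d ∣ t := by
  obtain ⟨v, hv⟩ := hy.exists_left_inv
  constructor
  · rintro ⟨s, hs⟩; exact ⟨v * s, by rw [show t = v*(y*t) by rw [← mul_assoc, hv, one_mul], hs]; ring⟩
  · exact fun h => Dvd.dvd.mul_left h y

lemma measurableSet_isUnit' : MeasurableSet {y : ℤ_[2] | IsUnit y} := by
  have : {y : ℤ_[2] | IsUnit y} = {y : ℤ_[2] | (2:ℤ_[2])^1 ∣ y - 0}ᶜ := by
    ext y; simp [isUnit_iff_not_dvd']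
  rw [this]
  exact (measurableSet_dvd' 1 0).compl

lemma meas_isUnit' (μ : Measure ℤ_[2]) [μ.IsAddHaarMeasure] [IsProbabilityMeasure μ] :
    μ {y : ℤ_[2] | IsUnit y} = 2⁻¹ := by
  have h : {y : ℤ_[2] | IsUnit y} = {y : ℤ_[2] | (2:ℤ_[2])^1 ∣ y - 0}ᶜ := by
    ext y; simp [isUnit_iff_not_dvd']
  rw [h, measure_compl (measurableSet_dvd' 1 0) (measure_ne_top μ _), meas_dvd', measure_univ,
    pow_one, ENNReal.one_sub_inv_two]

open scoped Classical in
lemma inner_w' (μ : Measure ℤ_[2]) [μ.IsAddHaarMeasure] [IsProbabilityMeasure μ]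
    (n : ℕ) (hn : 2 ≤ n) (y : ℤ_[2]) (hy : IsUnit y) (b : ℤ_[2]) :
    μ {w : ℤ_[2] | (2:ℤ_[2])^n ∣ 4*y*w - b}
      = if (4:ℤ_[2]) ∣ b then ((2:ℝ≥0∞)^(n-2))⁻¹ else 0 := by
  split_ifs with hb
  · obtain ⟨b', rfl⟩ := hb
    obtain ⟨v, hv⟩ := hy.exists_left_inv
    have hset : {w : ℤ_[2] | (2:ℤ_[2])^n ∣ 4*y*w - 4*b'} = {w : ℤ_[2] | (2:ℤ_[2])^(n-2) ∣ w - v*b'} := by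
      ext w
      simp only [Set.mem_setOf_eq]
      have h4 : (4:ℤ_[2])*y*w - 4*b' = 2^2 * (y*w - b') := by rw [four_eq']; ring
      have hpow : (2:ℤ_[2])^n = 2^2 * 2^(n-2) := by rw [← pow_add]; congr 1; omega
      rw [h4, hpow, mul_dvd_mul_iff_left (pow_ne_zero 2 prime_two'.ne_zero)]
      have hyw : y*w - b' = y * (w - v*b') := by
        have hb'' : y * (v * b') = b' := by rw [← mul_assoc, mul_comm y v, hv, one_mul]
        rw [mul_sub, hb'']
      rw [hyw, dvd_unit_mul' _ _ _ hy]
    rw [hset, meas_dvd']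
  · have hempty : {w : ℤ_[2] | (2:ℤ_[2])^n ∣ 4*y*w - b} = ∅ := by
      ext w
      simp only [Set.mem_setOf_eq, Set.mem_empty_iff_false, iff_false]
      intro hdvd
      apply hb
      have h4n : (4:ℤ_[2]) ∣ 2^n := by rw [four_eq']; exact pow_dvd_pow 2 hn
      have h1 : (4:ℤ_[2]) ∣ 4*y*w - b := dvd_trans h4n hdvd
      have h2 : (4:ℤ_[2]) ∣ 4*y*w := ⟨y*w, by ring⟩
      have := dvd_sub h2 h1
      simpa using this
    rw [hempty, measure_empty]

lemma two_pow_inv_succ' (j : ℕ) : (2:ℝ≥0∞)⁻¹ * ((2:ℝ≥0∞)^j)⁻¹ = ((2:ℝ≥0∞)^(j+1))⁻¹ := by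
  rw [pow_succ, ENNReal.mul_inv (by simp) (by simp), mul_comm]

lemma key' (μ : Measure ℤ_[2]) [μ.IsAddHaarMeasure] [IsProbabilityMeasure μ]
    (n : ℕ) (hn : 2 ≤ n) (a : ℤ_[2]) (ha : (4:ℤ_[2]) ∣ a ∨ (4:ℤ_[2]) ∣ a - 1) :
    (μ.prod (μ.prod (μ.prod μ))) {p : ℤ_[2] × ℤ_[2] × ℤ_[2] × ℤ_[2] |
        IsUnit p.2.1 ∧ (2:ℤ_[2])^n ∣ (p.1 - p.2.2.2)^2 + 4*p.2.1*p.2.2.1 - a}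
      = ((2:ℝ≥0∞)^n)⁻¹ := by
  set S : Set (ℤ_[2] × ℤ_[2] × ℤ_[2] × ℤ_[2]) :=
    {p | IsUnit p.2.1 ∧ (2:ℤ_[2])^n ∣ (p.1 - p.2.2.2)^2 + 4*p.2.1*p.2.2.1 - a} with hSdef
  have hg : Continuous (fun p : ℤ_[2] × ℤ_[2] × ℤ_[2] × ℤ_[2] =>
      (p.1 - p.2.2.2)^2 + 4*p.2.1*p.2.2.1 - a) := by fun_prop
  have hS : MeasurableSet S := by
    have : S = ((fun p : ℤ_[2] × ℤ_[2] × ℤ_[2] × ℤ_[2] => p.2.1) ⁻¹' {y | IsUnit y}) ∩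
        ((fun p : ℤ_[2] × ℤ_[2] × ℤ_[2] × ℤ_[2] =>
          (p.1 - p.2.2.2)^2 + 4*p.2.1*p.2.2.1 - a) ⁻¹' {x | (2:ℤ_[2])^n ∣ x}) := rfl
    rw [this]
    exact (measurable_snd.fst measurableSet_isUnit').inter (hg.measurable (measurableSet_dvd0 n))
  rw [Measure.prod_apply hS]
  have hsec : ∀ x : ℤ_[2], (μ.prod (μ.prod μ)) (Prod.mk x ⁻¹' S)
      = 2⁻¹ * (2⁻¹ * ((2:ℝ≥0∞)^(n-2))⁻¹) := by
    intro x
    have hS1 : MeasurableSet (Prod.mk x ⁻¹' S) := measurable_prodMk_left hS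
    rw [Measure.prod_apply hS1]
    have hsec2 : ∀ y : ℤ_[2], (μ.prod μ) (Prod.mk y ⁻¹' (Prod.mk x ⁻¹' S))
        = Set.indicator {y : ℤ_[2] | IsUnit y}
            (fun _ => 2⁻¹ * ((2:ℝ≥0∞)^(n-2))⁻¹) y := by
      intro y
      by_cases hy : IsUnit y
      · rw [Set.indicator_of_mem (show y ∈ {y : ℤ_[2] | IsUnit y} from hy)]
        set T' : Set (ℤ_[2] × ℤ_[2]) :=
          {r | (2:ℤ_[2])^n ∣ (x - r.1)^2 + 4*y*r.2 - a} with hT'def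
        have hT : Prod.mk y ⁻¹' (Prod.mk x ⁻¹' S) = Prod.swap ⁻¹' T' := by
          ext r
          simp only [hSdef, hT'def, Set.mem_preimage, Set.mem_setOf_eq, Prod.fst_swap,
            Prod.snd_swap, hy, true_and]
        have hT'meas : MeasurableSet T' := by
          have hc : Continuous (fun r : ℤ_[2] × ℤ_[2] => (x - r.1)^2 + 4*y*r.2 - a) := by fun_prop
          exact hc.measurable (measurableSet_dvd0 n)
        have hswap : (μ.prod μ) (Prod.swap ⁻¹' T') = (μ.prod μ) T' := by
          conv_rhs => rw [← Measure.prod_swap]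
          rw [Measure.map_apply measurable_swap hT'meas]
        rw [hT, hswap, Measure.prod_apply hT'meas]
        set E : Set ℤ_[2] := {z | (4:ℤ_[2]) ∣ a - (x - z)^2} with hEdef
        have hz : ∀ z : ℤ_[2], μ (Prod.mk z ⁻¹' T')
            = Set.indicator E (fun _ => ((2:ℝ≥0∞)^(n-2))⁻¹) z := by
          intro z
          have hrw : Prod.mk z ⁻¹' T' = {w : ℤ_[2] | (2:ℤ_[2])^n ∣ 4*y*w - (a - (x-z)^2)} := by
            ext w
            simp only [hT'def, Set.mem_preimage, Set.mem_setOf_eq]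
            rw [show (x - z)^2 + 4*y*w - a = 4*y*w - (a - (x-z)^2) from by ring]
          rw [hrw, inner_w' μ n hn y hy]
          by_cases hE : z ∈ E
          · rw [Set.indicator_of_mem hE]; exact if_pos hE
          · rw [Set.indicator_of_notMem hE]; exact if_neg hE
        have hEfact : MeasurableSet E ∧ μ E = 2⁻¹ := by
          rcases ha with ha | ha
          · have hEeq : E = {z : ℤ_[2] | (2:ℤ_[2])^1 ∣ z - x} := by
              ext z
              simp only [hEdef, Set.mem_setOf_eq, pow_one]
              constructor
              · intro h
                have h2 : (4:ℤ_[2]) ∣ (x - z)^2 := by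
                  have := dvd_sub ha h
                  simpa using this
                have := (four_dvd_sq_iff' _).mp h2
                rw [show x - z = -(z - x) from by ring, dvd_neg] at this
                exact this
              · intro h
                have h2 : (2:ℤ_[2]) ∣ (x - z) := by
                  rw [show x - z = -(z - x) from by ring, dvd_neg]; exact h
                exact dvd_sub ha ((four_dvd_sq_iff' _).mpr h2)
            constructor
            · rw [hEeq]; exact measurableSet_dvd' 1 x
            · rw [hEeq, meas_dvd', pow_one]
          · have hEeq : E = {z : ℤ_[2] | (2:ℤ_[2])^1 ∣ z - x}ᶜ := by
              ext z
              simp only [hEdef, Set.mem_setOf_eq, Set.mem_compl_iff, pow_one]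
              constructor
              · intro h h2
                have h2' : (2:ℤ_[2]) ∣ (x - z) := by
                  rw [show x - z = -(z - x) from by ring, dvd_neg]; exact h2
                have h4 : (4:ℤ_[2]) ∣ (x - z)^2 := (four_dvd_sq_iff' _).mpr h2'
                have ha4 : (4:ℤ_[2]) ∣ a := by
                  have := dvd_add h h4
                  simpa using this
                have h41 : (4:ℤ_[2]) ∣ 1 := by
                  have := dvd_sub ha4 ha
                  simpa using this
                exact two_not_dvd_one' (dvd_trans ⟨2, by norm_num⟩ h41)
              · intro h2
                have hodd : ¬ (2:ℤ_[2]) ∣ (x - z) := by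
                  intro hh
                  apply h2
                  rw [show z - x = -(x - z) from by ring, dvd_neg]
                  exact hh
                have h8 := eight_dvd_odd_sq' (x - z) hodd
                have h4 : (4:ℤ_[2]) ∣ (x - z)^2 - 1 := dvd_trans ⟨2, by norm_num⟩ h8
                have := dvd_sub ha h4
                simpa using this
            constructor
            · rw [hEeq]; exact (measurableSet_dvd' 1 x).compl
            · rw [hEeq, measure_compl (measurableSet_dvd' 1 x) (measure_ne_top μ _), meas_dvd',
                measure_univ, pow_one, ENNReal.one_sub_inv_two]
        rw [lintegral_congr hz, lintegral_indicator hEfact.1, setLIntegral_const, hEfact.2,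
          mul_comm]
      · rw [Set.indicator_of_notMem (show y ∉ {y : ℤ_[2] | IsUnit y} from hy)]
        have hempty : Prod.mk y ⁻¹' (Prod.mk x ⁻¹' S) = ∅ := by
          ext r
          simp only [hSdef, Set.mem_preimage, Set.mem_setOf_eq, Set.mem_empty_iff_false,
            iff_false, not_and]
          intro h
          exact absurd h hy
        rw [hempty, measure_empty]
    rw [lintegral_congr hsec2, lintegral_indicator measurableSet_isUnit', setLIntegral_const,
      meas_isUnit', mul_comm]
  rw [lintegral_congr hsec, lintegral_const, measure_univ, mul_one]
  rw [two_pow_inv_succ', two_pow_inv_succ', show n - 2 + 1 + 1 = n from by omega]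

/-- Theorem 6.1: let `m ≥ 2`, `H ≥ m`, and let `μ⁴` be the product Haar probability measure on
`ℤ_[2]⁴`, coordinates `(x, y, z, w)`, and `ξ = (x − w)² + 4yz`.  Then:
(1) for `c ∈ {1, 5}`, the measure of the event "`y` is a unit, `sqf(ξ) ≡ c (mod 8)` and
`H_M = H`" (i.e. `ξ = 2^{2(H−m)}·u` with `u` a unit, `u ≡ c (mod 8)`) is `(1/2)·4^{-(H−m+1)}`;
(2) the measure of the event "`y` is a unit, `sqf(ξ) ≡ 3 (mod 4)` and `H_M = H`"
(i.e. `ξ = 2^{2(H−m)+2}·u` with `u` a unit, `u ≡ 3 (mod 4)`) is `(1/4)·4^{-(H−m+1)}`;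
(3) the measure of the event "`y` is a unit, `sqf(ξ) ≡ 2 (mod 4)` and `H_M = H`"
(i.e. `ξ = 2^{2(H−m)+3}·u` with `u` a unit) is `(1/4)·4^{-(H−m+1)}`. -/
theorem stmt3 (m H : ℕ) (hm : 2 ≤ m) (hH : m ≤ H)
    (μ : Measure ℤ_[2]) [μ.IsAddHaarMeasure] [IsProbabilityMeasure μ] :
    (∀ c : ℤ_[2], c = 1 ∨ c = 5 →
      (μ.prod (μ.prod (μ.prod μ))) {p : ℤ_[2] × ℤ_[2] × ℤ_[2] × ℤ_[2] |
          IsUnit p.2.1 ∧ ∃ u : ℤ_[2], IsUnit u ∧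
            (p.1 - p.2.2.2) ^ 2 + 4 * p.2.1 * p.2.2.1 = 2 ^ (2 * (H - m)) * u ∧
            (8 : ℤ_[2]) ∣ u - c}
        = (1 / 2) * ((4 : ℝ≥0∞) ^ (H - m + 1))⁻¹) ∧
    (μ.prod (μ.prod (μ.prod μ))) {p : ℤ_[2] × ℤ_[2] × ℤ_[2] × ℤ_[2] |
        IsUnit p.2.1 ∧ ∃ u : ℤ_[2], IsUnit u ∧
          (p.1 - p.2.2.2) ^ 2 + 4 * p.2.1 * p.2.2.1 = 2 ^ (2 * (H - m) + 2) * u ∧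
          (4 : ℤ_[2]) ∣ u - 3}
      = (1 / 4) * ((4 : ℝ≥0∞) ^ (H - m + 1))⁻¹ ∧
    (μ.prod (μ.prod (μ.prod μ))) {p : ℤ_[2] × ℤ_[2] × ℤ_[2] × ℤ_[2] |
        IsUnit p.2.1 ∧ ∃ u : ℤ_[2], IsUnit u ∧
          (p.1 - p.2.2.2) ^ 2 + 4 * p.2.1 * p.2.2.1 = 2 ^ (2 * (H - m) + 3) * u}
      = (1 / 4) * ((4 : ℝ≥0∞) ^ (H - m + 1))⁻¹ := by
  obtain ⟨k, hk⟩ : ∃ k, k = H - m := ⟨H - m, rfl⟩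
  rw [← hk]
  have h4pow : ((4:ℝ≥0∞))^(k+1) = 2^(2*k+2) := by
    rw [show (4:ℝ≥0∞) = 2^2 from by norm_num, ← pow_mul]
    ring
  refine ⟨?_, ?_, ?_⟩
  · intro c hc
    have hcd : ¬ (2:ℤ_[2]) ∣ c := by
      rcases hc with rfl | rfl
      · exact two_not_dvd_one'
      · intro h
        have h4 : (2:ℤ_[2]) ∣ 4 := ⟨2, by norm_num⟩
        have := dvd_sub h h4
        norm_num at this
        exact two_not_dvd_one' this
    have hset : {p : ℤ_[2] × ℤ_[2] × ℤ_[2] × ℤ_[2] |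
          IsUnit p.2.1 ∧ ∃ u : ℤ_[2], IsUnit u ∧
            (p.1 - p.2.2.2) ^ 2 + 4 * p.2.1 * p.2.2.1 = 2 ^ (2 * k) * u ∧
            (8 : ℤ_[2]) ∣ u - c}
        = {p : ℤ_[2] × ℤ_[2] × ℤ_[2] × ℤ_[2] |
          IsUnit p.2.1 ∧ (2:ℤ_[2])^(2*k+3) ∣
            (p.1 - p.2.2.2) ^ 2 + 4 * p.2.1 * p.2.2.1 - 2 ^ (2 * k) * c} := by
      ext p
      simp only [Set.mem_setOf_eq]
      refine and_congr_right fun _ => ?_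
      constructor
      · rintro ⟨u, hu, hξ, t, ht⟩
        refine ⟨t, ?_⟩
        have hu' : u = c + 8*t := by linear_combination ht
        rw [hξ, hu']
        ring
      · rintro ⟨t, ht⟩
        refine ⟨c + 8*t, ?_, by linear_combination ht, ⟨t, by ring⟩⟩
        rw [isUnit_iff_not_dvd']
        intro h2
        apply hcd
        have h8 : (2:ℤ_[2]) ∣ 8*t := ⟨4*t, by ring⟩
        have := dvd_sub h2 h8
        simpa using this
    rw [hset]
    rw [key' μ (2*k+3) (by omega) (2^(2*k)*c) ?ha]
    · rw [h4pow, one_div, two_pow_inv_succ', show 2*k+2+1 = 2*k+3 from by omega]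
    · rcases Nat.eq_zero_or_pos k with rfl | hk0
      · right
        rcases hc with rfl | rfl
        · simp
        · rw [show (2:ℤ_[2])^(2*0)*5 - 1 = 4 from by norm_num]
      · left
        have h4 : (4:ℤ_[2]) ∣ 2^(2*k) := by
          rw [four_eq']
          exact pow_dvd_pow 2 (by omega)
        exact h4.mul_right c
  · have hset : {p : ℤ_[2] × ℤ_[2] × ℤ_[2] × ℤ_[2] |
          IsUnit p.2.1 ∧ ∃ u : ℤ_[2], IsUnit u ∧
            (p.1 - p.2.2.2) ^ 2 + 4 * p.2.1 * p.2.2.1 = 2 ^ (2 * k + 2) * u ∧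
            (4 : ℤ_[2]) ∣ u - 3}
        = {p : ℤ_[2] × ℤ_[2] × ℤ_[2] × ℤ_[2] |
          IsUnit p.2.1 ∧ (2:ℤ_[2])^(2*k+4) ∣
            (p.1 - p.2.2.2) ^ 2 + 4 * p.2.1 * p.2.2.1 - 2 ^ (2 * k + 2) * 3} := by
      ext p
      simp only [Set.mem_setOf_eq]
      refine and_congr_right fun _ => ?_
      constructor
      · rintro ⟨u, hu, hξ, t, ht⟩
        refine ⟨t, ?_⟩
        have hu' : u = 3 + 4*t := by linear_combination ht
        rw [hξ, hu']
        ring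
      · rintro ⟨t, ht⟩
        refine ⟨3 + 4*t, ?_, by linear_combination ht, ⟨t, by ring⟩⟩
        rw [isUnit_iff_not_dvd']
        intro h2
        have h4 : (2:ℤ_[2]) ∣ 4*t := ⟨2*t, by ring⟩
        have h3 : (2:ℤ_[2]) ∣ 3 := by
          have := dvd_sub h2 h4
          simpa using this
        have h22 : (2:ℤ_[2]) ∣ 2 := dvd_refl 2
        have := dvd_sub h3 h22
        norm_num at this
        exact two_not_dvd_one' this
    rw [hset]
    rw [key' μ (2*k+4) (by omega) (2^(2*k+2)*3) ?ha2]
    · rw [h4pow, show (1/4 : ℝ≥0∞) = 2⁻¹ * 2⁻¹ from by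
        rw [show (4:ℝ≥0∞) = 2*2 from by norm_num, one_div,
          ENNReal.mul_inv (by norm_num) (by norm_num)]]
      rw [mul_assoc, two_pow_inv_succ', two_pow_inv_succ',
        show 2*k+2+1+1 = 2*k+4 from by omega]
    · left
      have h4 : (4:ℤ_[2]) ∣ 2^(2*k+2) := by
        rw [four_eq']
        exact pow_dvd_pow 2 (by omega)
      exact h4.mul_right 3
  · have hset : {p : ℤ_[2] × ℤ_[2] × ℤ_[2] × ℤ_[2] |
          IsUnit p.2.1 ∧ ∃ u : ℤ_[2], IsUnit u ∧
            (p.1 - p.2.2.2) ^ 2 + 4 * p.2.1 * p.2.2.1 = 2 ^ (2 * k + 3) * u}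
        = {p : ℤ_[2] × ℤ_[2] × ℤ_[2] × ℤ_[2] |
          IsUnit p.2.1 ∧ (2:ℤ_[2])^(2*k+4) ∣
            (p.1 - p.2.2.2) ^ 2 + 4 * p.2.1 * p.2.2.1 - 2 ^ (2 * k + 3) * 1} := by
      ext p
      simp only [Set.mem_setOf_eq]
      refine and_congr_right fun _ => ?_
      constructor
      · rintro ⟨u, hu, hξ⟩
        rcases two_dvd_or' u with h2 | ⟨s, hs⟩
        · exact absurd h2 ((isUnit_iff_not_dvd' u).mp hu)
        · refine ⟨s, ?_⟩
          have hu' : u = 1 + 2*s := by linear_combination hs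
          rw [hξ, hu']
          ring
      · rintro ⟨t, ht⟩
        refine ⟨1 + 2*t, ?_, by linear_combination ht⟩
        rw [isUnit_iff_not_dvd']
        intro h2
        have h4 : (2:ℤ_[2]) ∣ 2*t := ⟨t, rfl⟩
        have := dvd_sub h2 h4
        exact two_not_dvd_one' (by simpa using this)
    rw [hset]
    rw [key' μ (2*k+4) (by omega) (2^(2*k+3)*1) ?ha3]
    · rw [h4pow, show (1/4 : ℝ≥0∞) = 2⁻¹ * 2⁻¹ from by
        rw [show (4:ℝ≥0∞) = 2*2 from by norm_num, one_div,
          ENNReal.mul_inv (by norm_num) (by norm_num)]]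
      rw [mul_assoc, two_pow_inv_succ', two_pow_inv_succ',
        show 2*k+2+1+1 = 2*k+4 from by omega]
    · left
      have h4 : (4:ℤ_[2]) ∣ 2^(2*k+3) := by
        rw [four_eq']
        exact pow_dvd_pow 2 (by omega)
      exact h4.mul_right 1
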